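/- arXiv:1307.4861 — 3 statements merged into one kernel-verified Lean document; each statement's English description precedes it below -/
import Mathlib

section
/- Let G be a finitely generated solvable group satisfying max-n, i.e., every normal subgroup of G is the normal closure of some finite subset of G. Then there exist a finite generating set B of G and n ∈ ℕ such that every element of G is a product of n palindromes over B. -/
/-- A palindromic word over `X`: a finite list of elements of `X ∪ X⁻¹`
that reads the same forwards and backwards. -/
def IsPalindromicWord {G : Type*} [Group G] (X : Set G) (w : List G) : Prop :=
  (∀ g ∈ w, g ∈ X ∨ g⁻¹ ∈ X) ∧ w.reverse = w

/-- `g` is a product (in order) of the evaluations of `n` palindromic words over `X`. -/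
def IsProdOfPalindromes {G : Type*} [Group G] (X : Set G) (n : ℕ) (g : G) : Prop :=
  ∃ ws : List (List G), ws.length = n ∧ (∀ w ∈ ws, IsPalindromicWord X w) ∧
    (ws.map List.prod).prod = g



set_option maxHeartbeats 1000000

namespace PalWidth


variable {H : Type*} [Group H]

/-- all letters of `w` lie in `X ∪ X⁻¹`. -/
def WOver (X : Set H) (w : List H) : Prop := ∀ l ∈ w, l ∈ X ∨ l⁻¹ ∈ X

lemma WOver.append {X : Set H} {u v : List H} (hu : WOver X u) (hv : WOver X v) :
    WOver X (u ++ v) := by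
  intro l hl
  rcases List.mem_append.mp hl with h | h
  · exact hu l h
  · exact hv l h

lemma WOver.reverse {X : Set H} {u : List H} (hu : WOver X u) : WOver X u.reverse := by
  intro l hl; exact hu l (List.mem_reverse.mp hl)

lemma WOver.mapinv {X : Set H} {u : List H} (hu : WOver X u) :
    WOver X (u.map fun x => x⁻¹) := by
  intro l hl
  rcases List.mem_map.mp hl with ⟨x, hx, rfl⟩
  rcases hu x hx with h | h
  · exact Or.inr (by simpa using h)
  · exact Or.inl h

lemma WOver.nil {X : Set H} : WOver X ([] : List H) := by intro l hl; simp at hl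

/-- basic: 1 is a product of n palindromes. -/
lemma isProd_one (X : Set H) (n : ℕ) : IsProdOfPalindromes X n (1 : H) := by
  refine ⟨List.replicate n [], by simp, ?_, by simp⟩
  intro w hw
  rw [List.eq_of_mem_replicate hw]
  exact ⟨fun g hg => by simp at hg, by simp⟩

lemma isProd_mul {X : Set H} {m n : ℕ} {g h : H}
    (hg : IsProdOfPalindromes X m g) (hh : IsProdOfPalindromes X n h) :
    IsProdOfPalindromes X (m + n) (g * h) := by
  obtain ⟨ws, hl, hp, hprod⟩ := hg
  obtain ⟨ws', hl', hp', hprod'⟩ := hh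
  refine ⟨ws ++ ws', by simp [hl, hl'], ?_, by simp [hprod, hprod']⟩
  intro w hw
  rcases List.mem_append.mp hw with h | h
  · exact hp w h
  · exact hp' w h

lemma isProd_mono_set {X Y : Set H} (hXY : X ⊆ Y) {n : ℕ} {g : H}
    (hg : IsProdOfPalindromes X n g) : IsProdOfPalindromes Y n g := by
  obtain ⟨ws, hl, hp, hprod⟩ := hg
  refine ⟨ws, hl, ?_, hprod⟩
  intro w hw
  obtain ⟨h1, h2⟩ := hp w hw
  exact ⟨fun l hl' => (h1 l hl').imp (fun h => hXY h) (fun h => hXY h), h2⟩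

lemma isProd_le {X : Set H} {n m : ℕ} (hnm : n ≤ m) {g : H}
    (hg : IsProdOfPalindromes X n g) : IsProdOfPalindromes X m g := by
  have := isProd_mul hg (isProd_one X (m - n))
  rwa [mul_one, Nat.add_sub_cancel' hnm] at this

lemma isProd_single {X : Set H} {w : List H} (hw : WOver X w) (hpal : w.reverse = w) :
    IsProdOfPalindromes X 1 w.prod :=
  ⟨[w], by simp, fun v hv => by simp at hv; subst hv; exact ⟨hw, hpal⟩, by simp⟩

lemma isProd_listProd {X : Set H} {k : ℕ} (L : List H)
    (hL : ∀ x ∈ L, IsProdOfPalindromes X k x) :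
    IsProdOfPalindromes X (k * L.length) L.prod := by
  induction L with
  | nil => simpa using isProd_one X 0
  | cons x t ih =>
      have : IsProdOfPalindromes X (k + k * t.length) (x * t.prod) :=
        isProd_mul (hL x (by simp)) (ih fun y hy => hL y (by simp [hy]))
      simpa [List.length_cons, Nat.mul_succ, Nat.mul_add, Nat.add_comm] using this

lemma isProd_zpow {X : Set H} {b : H} (hb : b ∈ X ∨ b⁻¹ ∈ X) (k : ℤ) :
    IsProdOfPalindromes X 1 (b ^ k) := by
  rcases le_or_gt 0 k with h | h
  · have := isProd_single (X := X) (w := List.replicate k.toNat b)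
      (fun l hl => by rw [List.eq_of_mem_replicate hl]; exact hb) (by simp)
    rwa [List.prod_replicate, ← zpow_natCast, Int.toNat_of_nonneg h] at this
  · have hb' : b⁻¹ ∈ X ∨ (b⁻¹)⁻¹ ∈ X := by simpa using hb.symm
    have := isProd_single (X := X) (w := List.replicate (-k).toNat b⁻¹)
      (fun l hl => by rw [List.eq_of_mem_replicate hl]; exact hb') (by simp)
    rw [List.prod_replicate, ← zpow_natCast, Int.toNat_of_nonneg (by omega), inv_zpow,
      ← zpow_neg, neg_neg] at this
    exact this






variable {H : Type*} [Group H]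

def invw (w : List H) : List H := (w.map fun x => x⁻¹).reverse

lemma invw_prod (w : List H) : (invw w).prod = w.prod⁻¹ :=
  (List.prod_inv_reverse w).symm

lemma mapinv_prod (w : List H) : (w.map fun x => x⁻¹).prod = w.reverse.prod⁻¹ := by
  induction w with
  | nil => simp
  | cons x t ih => simp [ih, List.prod_append, mul_assoc]

lemma invw_reverse (w : List H) : (invw w).reverse = w.map fun x => x⁻¹ := by
  simp [invw]

def xterm (p : H × List H) : H := p.2.prod⁻¹ * p.1 * p.2.prod
def yterm (p : H × List H) : H := p.2.reverse.prod * p.1 * p.2.reverse.prod⁻¹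

def xval (β : List (H × List H)) : H := (β.map xterm).prod
def yval (β : List (H × List H)) : H := (β.map yterm).reverse.prod

@[simp] lemma xval_nil : xval ([] : List (H × List H)) = 1 := rfl
@[simp] lemma yval_nil : yval ([] : List (H × List H)) = 1 := rfl

lemma xval_cons (p : H × List H) (β : List (H × List H)) :
    xval (p :: β) = xterm p * xval β := by simp [xval]

lemma yval_cons (p : H × List H) (β : List (H × List H)) :
    yval (p :: β) = yval β * yterm p := by simp [yval]

lemma xval_append (β γ : List (H × List H)) : xval (β ++ γ) = xval β * xval γ := by
  simp [xval]

def Tw : List H → List (H × List H) → List H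
  | prev, [] => prev
  | prev, p :: rest => prev ++ invw p.2 ++ [p.1] ++ Tw p.2 rest

lemma Tw_prod (prev : List H) (β : List (H × List H)) :
    (Tw prev β).prod = prev.prod * xval β := by
  induction β generalizing prev with
  | nil => simp [Tw]
  | cons p rest ih =>
      simp only [Tw, List.prod_append, ih p.2, invw_prod, xval_cons, xterm,
        List.prod_cons, List.prod_nil, mul_one]
      group

lemma Tw_reverse_prod (prev : List H) (β : List (H × List H)) :
    (Tw prev β).reverse.prod = yval β * prev.reverse.prod := by
  induction β generalizing prev with
  | nil => simp [Tw]
  | cons p rest ih =>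
      simp only [Tw, List.reverse_append, List.prod_append, ih p.2, invw_reverse,
        mapinv_prod, yval_cons, yterm, List.reverse_cons, List.reverse_nil,
        List.nil_append, List.prod_cons, List.prod_nil, mul_one]
      group

def pal1 (β : List (H × List H)) (b : H) : List H :=
  Tw [] β ++ [b] ++ (Tw [] β).reverse

def pal0 (β : List (H × List H)) : List H := Tw [] β ++ (Tw [] β).reverse

lemma pal1_prod (β : List (H × List H)) (b : H) :
    (pal1 β b).prod = xval β * b * yval β := by
  simp [pal1, List.prod_append, Tw_prod, Tw_reverse_prod, mul_assoc]

lemma pal0_prod (β : List (H × List H)) :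
    (pal0 β).prod = xval β * yval β := by
  simp [pal0, List.prod_append, Tw_prod, Tw_reverse_prod]

lemma pal1_rev (β : List (H × List H)) (b : H) : (pal1 β b).reverse = pal1 β b := by
  simp [pal1, List.reverse_append]

lemma pal0_rev (β : List (H × List H)) : (pal0 β).reverse = pal0 β := by
  simp [pal0, List.reverse_append]

def btw (β : List (H × List H)) : List (H × List H) :=
  β.map fun p => (p.1⁻¹, invw p.2.reverse)

lemma xval_btw (β : List (H × List H)) : xval (btw β) = (yval β)⁻¹ := by
  have h1 : (btw β).map xterm = (β.map yterm).map fun x => x⁻¹ := by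
    simp only [btw, List.map_map]
    refine List.map_congr_left fun p _ => ?_
    simp [xterm, yterm, invw_prod, mul_assoc]
  rw [xval, h1, mapinv_prod, yval]

lemma yval_btw (β : List (H × List H)) : yval (btw β) = (xval β)⁻¹ := by
  have h1 : (btw β).map yterm = (β.map xterm).map fun x => x⁻¹ := by
    simp only [btw, List.map_map]
    refine List.map_congr_left fun p _ => ?_
    simp only [Function.comp, yterm, xterm, invw_reverse, mapinv_prod,
      List.reverse_reverse]
    group
  rw [yval, h1, ← invw, invw_prod, xval]

/-- the commutator move -/
def Dmv (b : H) (β : List (H × List H)) : H := xval β * b * (xval β)⁻¹ * b⁻¹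

lemma Dmv_eq_pals (β : List (H × List H)) (b : H) :
    Dmv b β = (pal1 β b).prod * (pal0 (btw β)).prod * b⁻¹ := by
  rw [pal1_prod, pal0_prod, xval_btw, yval_btw, Dmv]
  group




variable {H : Type*} [Group H] [DecidableEq H]

lemma slot (A : Subgroup H) (hcomm : ∀ u ∈ A, ∀ v ∈ A, u * v = v * u)
    (LL : List H) (hnd : LL.Nodup) (P : H → H) (hP : ∀ b ∈ LL, P b ∈ A)
    (l : H) (hl : l ∈ LL) (z : H) (hz : z ∈ A) :
    z * (LL.map P).prod = (LL.map (Function.update P l (z * P l))).prod := by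
  induction LL with
  | nil => simp at hl
  | cons b rest ih =>
      rcases List.nodup_cons.mp hnd with ⟨hbrest, hndrest⟩
      by_cases hbl : b = l
      · subst hbl
        have hmapeq : rest.map (Function.update P b (z * P b)) = rest.map P :=
          List.map_congr_left fun x hx =>
            Function.update_of_ne (by rintro rfl; exact hbrest hx) _ _
        simp only [List.map_cons, List.prod_cons, hmapeq, Function.update_self]
        rw [mul_assoc]
      · have hlrest : l ∈ rest := by
          rcases List.mem_cons.mp hl with h | h
          · exact absurd h.symm hbl
          · exact h
        have hcz : z * P b = P b * z := hcomm z hz (P b) (hP b (by simp))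
        have ihr := ih hndrest (fun x hx => hP x (by simp [hx])) hlrest
        simp only [List.map_cons, List.prod_cons]
        rw [← mul_assoc, hcz, mul_assoc, ihr, Function.update_of_ne hbl (z * P l) P]



section Part4
variable {H : Type*} [Group H]

def OKL (X : Set H) (A : Subgroup H) (β : List (H × List H)) : Prop :=
  ∀ p ∈ β, p.1 ∈ A ∧ (p.1 ∈ X ∨ p.1⁻¹ ∈ X) ∧ WOver X p.2

lemma WOver.invw {X : Set H} {w : List H} (hw : WOver X w) : WOver X (PalWidth.invw w) :=
  (hw.mapinv).reverse

lemma WOver.singleton {X : Set H} {v : H} (hv : v ∈ X ∨ v⁻¹ ∈ X) : WOver X [v] := by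
  intro l hl; simp at hl; subst hl; exact hv

lemma Tw_wover {X : Set H} (β : List (H × List H))
    (hβ : ∀ p ∈ β, (p.1 ∈ X ∨ p.1⁻¹ ∈ X) ∧ WOver X p.2) :
    ∀ (prev : List H), WOver X prev → WOver X (Tw prev β) := by
  induction β with
  | nil => intro prev hprev; exact hprev
  | cons p rest ih =>
      intro prev hprev
      have hp := hβ p (by simp)
      exact ((hprev.append hp.2.invw).append (WOver.singleton hp.1)).append
        (ih (fun q hq => hβ q (by simp [hq])) p.2 hp.2)

lemma btw_cond {X : Set H} {β : List (H × List H)}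
    (hβ : ∀ p ∈ β, (p.1 ∈ X ∨ p.1⁻¹ ∈ X) ∧ WOver X p.2) :
    ∀ p ∈ btw β, (p.1 ∈ X ∨ p.1⁻¹ ∈ X) ∧ WOver X p.2 := by
  intro p hp
  rcases List.mem_map.mp hp with ⟨q, hq, rfl⟩
  have h := hβ q hq
  exact ⟨by simpa using h.1.symm, (h.2.reverse).invw⟩

lemma xterm_mem {A : Subgroup H} (hA : A.Normal) {p : H × List H} (hp : p.1 ∈ A) :
    xterm p ∈ A := by
  have := hA.conj_mem p.1 hp p.2.prod⁻¹
  simpa [xterm, mul_assoc] using this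

lemma xval_mem {A : Subgroup H} (hA : A.Normal) {β : List (H × List H)}
    (h : ∀ p ∈ β, p.1 ∈ A) : xval β ∈ A := by
  refine Subgroup.list_prod_mem _ ?_
  intro x hx
  rcases List.mem_map.mp hx with ⟨p, hp, rfl⟩
  exact xterm_mem hA (h p hp)

lemma Dmv_mem {A : Subgroup H} (hA : A.Normal) {b : H} {β : List (H × List H)}
    (h : ∀ p ∈ β, p.1 ∈ A) : Dmv b β ∈ A := by
  have h1 := xval_mem hA h
  have h2 := hA.conj_mem _ (A.inv_mem h1) b
  have : Dmv b β = xval β * (b * (xval β)⁻¹ * b⁻¹) := by rw [Dmv]; group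
  rw [this]
  exact A.mul_mem h1 h2

lemma Dmv_isProd {X : Set H} {b : H} (hb : b ∈ X ∨ b⁻¹ ∈ X) {β : List (H × List H)}
    (hβ : ∀ p ∈ β, (p.1 ∈ X ∨ p.1⁻¹ ∈ X) ∧ WOver X p.2) :
    IsProdOfPalindromes X 3 (Dmv b β) := by
  rw [Dmv_eq_pals]
  have h1 : IsProdOfPalindromes X 1 (pal1 β b).prod := by
    refine isProd_single ?_ (pal1_rev β b)
    have hT := Tw_wover β hβ [] WOver.nil
    exact (hT.append (WOver.singleton hb)).append hT.reverse
  have h2 : IsProdOfPalindromes X 1 (pal0 (btw β)).prod := by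
    refine isProd_single ?_ (pal0_rev (btw β))
    have hT := Tw_wover (btw β) (btw_cond hβ) [] WOver.nil
    exact hT.append hT.reverse
  have h3 : IsProdOfPalindromes X 1 (b⁻¹) := by
    have := isProd_single (X := X) (WOver.singleton (by simpa using hb.symm))
      (by simp : ([b⁻¹] : List H).reverse = [b⁻¹])
    simpa using this
  exact isProd_mul (isProd_mul h1 h2) h3

lemma Dmv_append {A : Subgroup H} (hA : A.Normal)
    (hcomm : ∀ u ∈ A, ∀ v ∈ A, u * v = v * u) {b : H} {β γ : List (H × List H)}
    (hβ : ∀ p ∈ β, p.1 ∈ A) (hγ : ∀ p ∈ γ, p.1 ∈ A) :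
    Dmv b β * Dmv b γ = Dmv b (β ++ γ) := by
  have hu := xval_mem hA hβ
  have hv := xval_mem hA hγ
  set u := xval β
  set v := xval γ
  have hP : b * u⁻¹ * b⁻¹ ∈ A := by simpa [mul_assoc] using hA.conj_mem _ (A.inv_mem hu) b
  have hQ : b * v⁻¹ * b⁻¹ ∈ A := by simpa [mul_assoc] using hA.conj_mem _ (A.inv_mem hv) b
  have h1 : (b * u⁻¹ * b⁻¹) * v = v * (b * u⁻¹ * b⁻¹) := hcomm _ hP _ hv
  have h2 : (b * v⁻¹ * b⁻¹) * (b * u⁻¹ * b⁻¹) = (b * u⁻¹ * b⁻¹) * (b * v⁻¹ * b⁻¹) :=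
    hcomm _ hQ _ hP
  rw [Dmv, Dmv, Dmv, xval_append]
  calc u * b * u⁻¹ * b⁻¹ * (v * b * v⁻¹ * b⁻¹)
      = u * ((b * u⁻¹ * b⁻¹) * v) * (b * v⁻¹ * b⁻¹) := by group
    _ = u * (v * (b * u⁻¹ * b⁻¹)) * (b * v⁻¹ * b⁻¹) := by rw [h1]
    _ = u * v * ((b * u⁻¹ * b⁻¹) * (b * v⁻¹ * b⁻¹)) := by group
    _ = u * v * ((b * v⁻¹ * b⁻¹) * (b * u⁻¹ * b⁻¹)) := by rw [h2]
    _ = u * v * b * (u * v)⁻¹ * b⁻¹ := by group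

end Part4


section Part5
variable {H : Type*} [Group H]

lemma assembly {X : Set H} {A : Subgroup H} (hA : A.Normal)
    (hcomm : ∀ u ∈ A, ∀ v ∈ A, u * v = v * u)
    (LL : List H) (hnd : LL.Nodup)
    (hcov : ∀ l : H, (l ∈ X ∨ l⁻¹ ∈ X) → l ∈ LL) :
    ∀ (n : ℕ) (β : List (H × List H)), OKL X A β →
      (β.map fun p => p.2.length).sum = n →
      ∃ F : H → List (H × List H), (∀ b, OKL X A (F b)) ∧
        xval β = (LL.map fun b => Dmv b (F b)).prod * (β.map Prod.fst).prod := by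
  classical
  intro n
  induction n using Nat.strong_induction_on with
  | _ n ih =>
    intro β hOK hsum
    by_cases hall : ∀ p ∈ β, p.2 = []
    · refine ⟨fun _ => [], fun b => (by intro p hp; simp at hp), ?_⟩
      have h1 : β.map xterm = β.map Prod.fst := List.map_congr_left fun p hp => by
        have := hall p hp
        simp [xterm, this]
      have h2 : (LL.map fun b => Dmv b ([] : List (H × List H))) = LL.map fun _ => (1:H) :=
        List.map_congr_left fun b _ => by simp [Dmv]
      rw [xval, h1, h2]
      simp
    · push_neg at hall
      obtain ⟨p, hpmem, hpne⟩ := hall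
      obtain ⟨β₁, β₂, rfl⟩ := List.append_of_mem hpmem
      obtain ⟨v, g⟩ := p
      have hvA : v ∈ A := (hOK (v, g) hpmem).1
      have hvX : v ∈ X ∨ v⁻¹ ∈ X := (hOK (v, g) hpmem).2.1
      have hgX : WOver X g := (hOK (v, g) hpmem).2.2
      have hgne : g ≠ [] := hpne
      set g' := g.dropLast with hg'def
      set l0 := g.getLast hgne with hl0def
      have hgdec : g' ++ [l0] = g := List.dropLast_append_getLast hgne
      have hg'X : WOver X g' := fun l hl => hgX l (by
        rw [← hgdec]; exact List.mem_append.mpr (Or.inl hl))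
      have hl0mem : l0 ∈ g := List.getLast_mem hgne
      have hl0X : l0 ∈ X ∨ l0⁻¹ ∈ X := hgX l0 hl0mem
      have hbX : l0⁻¹ ∈ X ∨ (l0⁻¹)⁻¹ ∈ X := by simpa using hl0X.symm
      have hbLL : l0⁻¹ ∈ LL := hcov _ hbX
      set t' := xterm (v, g') with ht'def
      set z := Dmv l0⁻¹ [(v⁻¹, g')] with hzdef
      have hxz : xval [(v⁻¹, g')] = t'⁻¹ := by
        simp only [xval, List.map_cons, List.map_nil, List.prod_cons, List.prod_nil,
          mul_one, xterm, ht'def]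
        group
      have hzval : z = t'⁻¹ * l0⁻¹ * t' * l0 := by
        rw [hzdef, Dmv, hxz]; group
      have hterm : xterm (v, g) = t' * z := by
        have hgp : g.prod = g'.prod * l0 := by
          rw [← hgdec]; simp
        rw [hzval, xterm, hgp, ht'def, xterm]
        group
      -- shorter list
      set β' := β₁ ++ (v, g') :: β₂ with hβ'def
      have hOK' : OKL X A β' := by
        intro q hq
        rcases List.mem_append.mp hq with h | h
        · exact hOK q (List.mem_append.mpr (Or.inl h))
        · rcases List.mem_cons.mp h with h | h
          · subst h; exact ⟨hvA, hvX, hg'X⟩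
          · exact hOK q (List.mem_append.mpr (Or.inr (List.mem_cons.mpr (Or.inr h))))
      have hglen : g.length = g'.length + 1 := by
        rw [← hgdec]; simp
      have hsum' : (β'.map fun p => p.2.length).sum < n := by
        rw [← hsum, hβ'def]
        simp [hglen]
      obtain ⟨F, hF, hxval'⟩ := ih _ hsum' β' hOK' rfl
      -- memberships
      have hzA : z ∈ A := by
        rw [hzdef]
        exact Dmv_mem hA (by
          intro q hq
          simp only [List.mem_singleton] at hq
          subst hq
          exact A.inv_mem hvA)
      have hfstA : ∀ γ : List (H × List H), OKL X A γ → ∀ x ∈ γ.map Prod.fst, x ∈ A := by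
        intro γ hγ x hx
        rcases List.mem_map.mp hx with ⟨q, hq, rfl⟩
        exact (hγ q hq).1
      have hxβ₂A : xval β₂ ∈ A := xval_mem hA (fun q hq =>
        (hOK q (List.mem_append.mpr (Or.inr (List.mem_cons.mpr (Or.inr hq))))).1)
      have hDDA : ∀ b ∈ LL, Dmv b (F b) ∈ A := fun b _ =>
        Dmv_mem hA (fun q hq => (hF b q hq).1)
      have hDDprodA : (LL.map fun b => Dmv b (F b)).prod ∈ A := by
        refine Subgroup.list_prod_mem _ ?_
        intro x hx
        rcases List.mem_map.mp hx with ⟨b, hb, rfl⟩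
        exact hDDA b hb
      have hVVA : (β'.map Prod.fst).prod ∈ A :=
        Subgroup.list_prod_mem _ (hfstA β' hOK')
      -- main chain
      have e1 : xval (β₁ ++ (v, g) :: β₂) = xval β' * z := by
        rw [hβ'def, xval_append, xval_append, xval_cons, xval_cons, hterm]
        have : z * xval β₂ = xval β₂ * z := hcomm z hzA _ hxβ₂A
        rw [mul_assoc t' z, this]
        group
        rw [ht'def]
      have e2 : xval (β₁ ++ (v, g) :: β₂)
          = z * ((LL.map fun b => Dmv b (F b)).prod * (β'.map Prod.fst).prod) := by
        rw [e1, hxval']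
        have c1 : ((LL.map fun b => Dmv b (F b)).prod * (β'.map Prod.fst).prod) * z
            = z * ((LL.map fun b => Dmv b (F b)).prod * (β'.map Prod.fst).prod) :=
          hcomm _ (A.mul_mem hDDprodA hVVA) z hzA
        rw [← c1]
      set F' := Function.update F l0⁻¹ ([(v⁻¹, g')] ++ F l0⁻¹) with hF'def
      have hOKF' : ∀ b, OKL X A (F' b) := by
        intro b
        rw [hF'def]
        by_cases hbe : b = l0⁻¹
        · subst hbe
          rw [Function.update_self]
          intro q hq
          rcases List.mem_append.mp hq with h | h
          · simp only [List.mem_singleton] at h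
            subst h
            exact ⟨A.inv_mem hvA, by simpa using hvX.symm, hg'X⟩
          · exact hF _ q h
        · rw [Function.update_of_ne hbe]
          exact hF b
      refine ⟨F', hOKF', ?_⟩
      have hslot := slot A hcomm LL hnd (fun b => Dmv b (F b)) hDDA l0⁻¹ hbLL z hzA
      have hmapeq : LL.map (Function.update (fun b => Dmv b (F b)) l0⁻¹
            (z * Dmv l0⁻¹ (F l0⁻¹)))
          = LL.map fun b => Dmv b (F' b) := by
        refine List.map_congr_left fun b _ => ?_
        by_cases hbe : b = l0⁻¹
        · subst hbe
          rw [Function.update_self, hF'def, Function.update_self, hzdef]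
          exact Dmv_append hA hcomm
            (by intro q hq; simp only [List.mem_singleton] at hq; subst hq;
                exact A.inv_mem hvA)
            (fun q hq => (hF _ q hq).1)
        · rw [Function.update_of_ne hbe, hF'def, Function.update_of_ne hbe]
      have hfst : β'.map Prod.fst = (β₁ ++ (v, g) :: β₂).map Prod.fst := by
        simp [hβ'def]
      rw [e2, ← mul_assoc, hslot, hmapeq, hfst]

end Part5


section Part6
variable {H : Type*} [Group H]

lemma exists_word_of_mem_closure {s : Set H} {x : H} (hx : x ∈ Subgroup.closure s) :
    ∃ l : List H, (∀ y ∈ l, y ∈ s ∨ y⁻¹ ∈ s) ∧ l.prod = x := by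
  have h1 : x ∈ Submonoid.closure (s ∪ s⁻¹) := by
    rw [← Subgroup.closure_toSubmonoid]; exact hx
  obtain ⟨l, hl, hp⟩ := Submonoid.exists_list_of_mem_closure h1
  exact ⟨l, fun y hy => by
    rcases hl y hy with h | h
    · exact Or.inl h
    · exact Or.inr (by simpa using h), hp⟩

lemma collect {X : Set H} {A : Subgroup H}
    (hcomm : ∀ u ∈ A, ∀ v ∈ A, u * v = v * u)
    (LL : List H) (hnd : LL.Nodup)
    (hcov : ∀ l : H, (l ∈ X ∨ l⁻¹ ∈ X) → l ∈ LL) :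
    ∀ (L : List H), (∀ v ∈ L, v ∈ A ∧ (v ∈ X ∨ v⁻¹ ∈ X)) →
      ∃ K : H → ℤ, (∀ b, K b ≠ 0 → b ∈ A) ∧
        L.prod = (LL.map fun b => b ^ K b).prod := by
  classical
  intro L
  induction L with
  | nil =>
      intro _
      refine ⟨fun _ => 0, by simp, ?_⟩
      rw [List.prod_nil]
      symm
      apply List.prod_eq_one
      intro x hx
      rcases List.mem_map.mp hx with ⟨b, _, rfl⟩
      simp
  | cons v rest ih =>
      intro hL
      obtain ⟨K, hKA, hK⟩ := ih (fun x hx => hL x (by simp [hx]))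
      have hvA := (hL v (by simp)).1
      have hvX := (hL v (by simp)).2
      have hvLL : v ∈ LL := hcov v hvX
      have hP : ∀ b ∈ LL, b ^ K b ∈ A := by
        intro b _
        by_cases h : K b = 0
        · rw [h, zpow_zero]; exact A.one_mem
        · exact A.zpow_mem (hKA b h) _
      have hslot := slot A hcomm LL hnd (fun b => b ^ K b) hP v hvLL v hvA
      refine ⟨Function.update K v (K v + 1), ?_, ?_⟩
      · intro b hb
        by_cases hbe : b = v
        · subst hbe; exact hvA
        · rw [Function.update_of_ne hbe] at hb; exact hKA b hb
      · rw [List.prod_cons, hK, hslot]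
        congr 1
        refine List.map_congr_left fun b _ => ?_
        by_cases hbe : b = v
        · subst hbe
          rw [Function.update_self, Function.update_self, ← zpow_one_add, add_comm]
        · rw [Function.update_of_ne hbe, Function.update_of_ne hbe]

theorem core {X : Set H} {A : Subgroup H} (hA : A.Normal)
    (hcomm : ∀ u ∈ A, ∀ v ∈ A, u * v = v * u)
    (LL : List H) (hnd : LL.Nodup)
    (hcov : ∀ l : H, (l ∈ X ∨ l⁻¹ ∈ X) → l ∈ LL)
    (hLLc : ∀ b ∈ LL, b ∈ X ∨ b⁻¹ ∈ X)
    (hgen : ∀ h : H, ∃ w : List H, WOver X w ∧ w.prod = h)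
    (S : Set H) (hSX : ∀ s ∈ S, s ∈ X) (hSA : ∀ s ∈ S, s ∈ A) :
    ∀ ν ∈ Subgroup.normalClosure S, IsProdOfPalindromes X (4 * LL.length) ν := by
  intro ν hν
  obtain ⟨L, hLmem, hLprod⟩ := exists_word_of_mem_closure (s := Group.conjugatesOfSet S) hν
  -- build a conjugate-list representation
  have hβ : ∃ β : List (H × List H), OKL X A β ∧ xval β = L.prod := by
    clear hLprod
    induction L with
    | nil => exact ⟨[], by intro p hp; simp at hp, by simp⟩
    | cons y rest ihL =>
        obtain ⟨β, hβOK, hβval⟩ := ihL (fun t ht => hLmem t (by simp [ht]))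
        have hy := hLmem y (by simp)
        have hyform : ∃ v : H, (v ∈ A ∧ (v ∈ X ∨ v⁻¹ ∈ X)) ∧ ∃ c : H, c * v * c⁻¹ = y := by
          rcases hy with h | h
          · rcases Group.mem_conjugatesOfSet_iff.mp h with ⟨a, haS, hconj⟩
            rcases isConj_iff.mp hconj with ⟨c, hc⟩
            exact ⟨a, ⟨hSA a haS, Or.inl (hSX a haS)⟩, c, hc⟩
          · rcases Group.mem_conjugatesOfSet_iff.mp h with ⟨a, haS, hconj⟩
            rcases isConj_iff.mp hconj with ⟨c, hc⟩
            refine ⟨a⁻¹, ⟨A.inv_mem (hSA a haS), Or.inr (by simpa using hSX a haS)⟩, c, ?_⟩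
            rw [← inv_inv y, ← hc]
            group
        obtain ⟨v, ⟨hvA, hvX⟩, c, hc⟩ := hyform
        obtain ⟨w, hwX, hwprod⟩ := hgen c⁻¹
        refine ⟨(v, w) :: β, ?_, ?_⟩
        · intro p hp
          rcases List.mem_cons.mp hp with h | h
          · subst h; exact ⟨hvA, hvX, hwX⟩
          · exact hβOK p h
        · rw [xval_cons, hβval, List.prod_cons]
          congr 1
          rw [xterm, hwprod, inv_inv]
          exact hc
  obtain ⟨β, hβOK, hβval⟩ := hβ
  obtain ⟨F, hFOK, hxval⟩ := assembly hA hcomm LL hnd hcov _ β hβOK rfl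
  have hDD : IsProdOfPalindromes X (3 * LL.length) (LL.map fun b => Dmv b (F b)).prod := by
    have := isProd_listProd (X := X) (k := 3) (LL.map fun b => Dmv b (F b)) ?_
    · simpa using this
    · intro x hx
      rcases List.mem_map.mp hx with ⟨b, hb, rfl⟩
      exact Dmv_isProd (hLLc b hb) (fun p hp => ((hFOK b) p hp).2)
  have hcond : ∀ x ∈ β.map Prod.fst, x ∈ A ∧ (x ∈ X ∨ x⁻¹ ∈ X) := by
    intro x hx
    rcases List.mem_map.mp hx with ⟨p, hp, rfl⟩
    exact ⟨(hβOK p hp).1, (hβOK p hp).2.1⟩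
  have hVV : IsProdOfPalindromes X (1 * LL.length) (β.map Prod.fst).prod := by
    obtain ⟨K, hKA, hKeq⟩ := collect hcomm LL hnd hcov (β.map Prod.fst) hcond
    rw [hKeq]
    have hz : ∀ x ∈ (LL.map fun b => b ^ K b), IsProdOfPalindromes X 1 x := by
      intro x hx
      rcases List.mem_map.mp hx with ⟨b, hb, rfl⟩
      exact isProd_zpow (hLLc b hb) _
    have := isProd_listProd (X := X) (k := 1) (LL.map fun b => b ^ K b) hz
    simpa using this
  have htot := isProd_mul hDD hVV
  rw [← hxval, hβval, hLprod] at htot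
  have harith : 3 * LL.length + 1 * LL.length = 4 * LL.length := by ring
  rwa [harith] at htot

end Part6


section Part7
variable {G : Type*} [Group G] {H : Type*} [Group H]

lemma isProd_lift (π : G →* H) (C : Set G) {n : ℕ} {h0 : H}
    (h : IsProdOfPalindromes (π '' C) n h0) :
    ∃ q : G, IsProdOfPalindromes C n q ∧ π q = h0 := by
  classical
  obtain ⟨ws, hlen, hpal, hprod⟩ := h
  set φ : H → G := fun l =>
    if h1 : ∃ c, c ∈ C ∧ π c = l then h1.choose
    else if h2 : ∃ c, c ∈ C ∧ π c = l⁻¹ then h2.choose⁻¹ else 1 with hφdef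
  have hφ : ∀ l : H, (l ∈ π '' C ∨ l⁻¹ ∈ π '' C) →
      (φ l ∈ C ∨ (φ l)⁻¹ ∈ C) ∧ π (φ l) = l := by
    intro l hl
    by_cases h1 : ∃ c, c ∈ C ∧ π c = l
    · have hs := h1.choose_spec
      simp only [hφdef, dif_pos h1]
      exact ⟨Or.inl hs.1, hs.2⟩
    · have h2 : ∃ c, c ∈ C ∧ π c = l⁻¹ := by
        rcases hl with h | h
        · rcases h with ⟨c, hc, hcl⟩; exact absurd ⟨c, hc, hcl⟩ h1
        · rcases h with ⟨c, hc, hcl⟩; exact ⟨c, hc, hcl⟩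
      have hs := h2.choose_spec
      simp only [hφdef, dif_neg h1, dif_pos h2]
      refine ⟨Or.inr (by simpa using hs.1), ?_⟩
      rw [map_inv, hs.2, inv_inv]
  refine ⟨((ws.map (List.map φ)).map List.prod).prod, ?_, ?_⟩
  · refine ⟨ws.map (List.map φ), by simp [hlen], ?_, rfl⟩
    intro w hw
    rcases List.mem_map.mp hw with ⟨w0, hw0, rfl⟩
    obtain ⟨hw0X, hw0rev⟩ := hpal w0 hw0
    constructor
    · intro g hg
      rcases List.mem_map.mp hg with ⟨l, hl, rfl⟩
      exact (hφ l (hw0X l hl)).1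
    · rw [← List.map_reverse, hw0rev]
  · rw [← hprod, MonoidHom.map_list_prod, List.map_map, List.map_map]
    congr 1
    refine List.map_congr_left fun w0 hw0 => ?_
    obtain ⟨hw0X, _⟩ := hpal w0 hw0
    simp only [Function.comp]
    rw [MonoidHom.map_list_prod, List.map_map]
    congr 1
    conv_rhs => rw [← List.map_id w0]
    refine List.map_congr_left fun l hl => ?_
    exact (hφ l (hw0X l hl)).2

lemma map_ncl_le (π : G →* H) (T : Set G) :
    Subgroup.map π (Subgroup.normalClosure T) ≤ Subgroup.normalClosure (π '' T) := by
  rw [Subgroup.map_le_iff_le_comap]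
  haveI : (Subgroup.comap π (Subgroup.normalClosure (π '' T))).Normal :=
    Subgroup.Normal.comap Subgroup.normalClosure_normal π
  apply Subgroup.normalClosure_le_normal
  intro t ht
  exact Subgroup.subset_normalClosure (Set.mem_image_of_mem π ht)

end Part7

end PalWidth



open PalWidth in
theorem solvable_max_n_finite_palindromic_width {G : Type*} [Group G]
    [Group.FG G] [Group.IsSolvable G]
    (hmaxn : ∀ N : Subgroup G, N.Normal → ∃ X : Finset G,
      Subgroup.normalClosure (X : Set G) = N) :
    ∃ (B : Finset G) (n : ℕ), Subgroup.closure (B : Set G) = ⊤ ∧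
      ∀ g : G, IsProdOfPalindromes (B : Set G) n g := by
  classical
  obtain ⟨d, hd⟩ := Group.IsSolvable.solvable (G := G)
  have claim : ∀ i : ℕ, ∃ (C : Finset G) (n : ℕ), Subgroup.closure (C : Set G) = ⊤ ∧
      ∀ g : G, ∃ p : G, IsProdOfPalindromes (C : Set G) n p ∧
        p⁻¹ * g ∈ derivedSeries G i := by
    intro i
    induction i with
    | zero =>
        obtain ⟨S, hStop, hSfin⟩ := Group.fg_iff.mp (inferInstance : Group.FG G)
        refine ⟨hSfin.toFinset, 0, by simpa [Set.Finite.coe_toFinset] using hStop, ?_⟩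
        intro g
        refine ⟨1, isProd_one _ 0, ?_⟩
        rw [derivedSeries_zero]
        exact Subgroup.mem_top _
    | succ i ihi =>
        obtain ⟨C, n, hCtop, hP⟩ := ihi
        obtain ⟨T, hT⟩ := hmaxn (derivedSeries G i) (derivedSeries_normal G i)
        set C' : Finset G := C ∪ T with hC'def
        haveI hN' : (derivedSeries G (i + 1)).Normal := derivedSeries_normal G (i + 1)
        set π := QuotientGroup.mk' (derivedSeries G (i + 1)) with hπdef
        have hπsurj : Function.Surjective π := QuotientGroup.mk'_surjective _
        set X : Set (G ⧸ derivedSeries G (i + 1)) := π '' (C' : Set G) with hXdef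
        set A := Subgroup.map π (derivedSeries G i) with hAdef
        have hA : A.Normal := (derivedSeries_normal G i).map π hπsurj
        have hCsub : (C : Set G) ⊆ (C' : Set G) := by
          rw [hC'def]; simp only [Finset.coe_union]; exact Set.subset_union_left
        have hTsub : (T : Set G) ⊆ (C' : Set G) := by
          rw [hC'def]; simp only [Finset.coe_union]; exact Set.subset_union_right
        have hC'top : Subgroup.closure (C' : Set G) = ⊤ := by
          apply le_antisymm le_top
          rw [← hCtop]
          exact Subgroup.closure_mono hCsub
        have hcomm : ∀ u ∈ A, ∀ v ∈ A, u * v = v * u := by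
          intro u hu v hv
          obtain ⟨u₀, hu₀, rfl⟩ := hu
          obtain ⟨v₀, hv₀, rfl⟩ := hv
          have hcom : (u₀⁻¹ * v₀⁻¹ * u₀ * v₀ : G) ∈ derivedSeries G (i + 1) := by
            rw [derivedSeries_succ]
            have := Subgroup.commutator_mem_commutator ((derivedSeries G i).inv_mem hu₀)
              ((derivedSeries G i).inv_mem hv₀)
            simpa [commutatorElement_def, mul_assoc] using this
          have h1 : π (u₀⁻¹ * v₀⁻¹ * u₀ * v₀) = 1 :=
            (QuotientGroup.eq_one_iff _).mpr hcom
          have h2 : (π v₀ * π u₀)⁻¹ * (π u₀ * π v₀) = 1 := by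
            rw [mul_inv_rev]
            rw [map_mul, map_mul, map_mul, map_inv, map_inv] at h1
            rw [← mul_assoc]
            exact h1
          exact (inv_mul_eq_one.mp h2).symm
        set LL : List (G ⧸ derivedSeries G (i + 1)) :=
          ((C'.toList.map fun c => π c) ++ (C'.toList.map fun c => (π c)⁻¹)).dedup
          with hLLdef
        have hnd : LL.Nodup := List.nodup_dedup _
        have hcov : ∀ l : G ⧸ derivedSeries G (i + 1), (l ∈ X ∨ l⁻¹ ∈ X) → l ∈ LL := by
          intro l hl
          rw [hLLdef, List.mem_dedup, List.mem_append]
          rcases hl with ⟨c, hc, rfl⟩ | ⟨c, hc, hcl⟩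
          · exact Or.inl (List.mem_map.mpr ⟨c, Finset.mem_toList.mpr hc, rfl⟩)
          · refine Or.inr (List.mem_map.mpr ⟨c, Finset.mem_toList.mpr hc, ?_⟩)
            rw [hcl, inv_inv]
        have hLLc : ∀ b ∈ LL, b ∈ X ∨ b⁻¹ ∈ X := by
          intro b hb
          rw [hLLdef, List.mem_dedup, List.mem_append] at hb
          rcases hb with h | h
          · rcases List.mem_map.mp h with ⟨c, hc, rfl⟩
            exact Or.inl ⟨c, Finset.mem_toList.mp hc, rfl⟩
          · rcases List.mem_map.mp h with ⟨c, hc, rfl⟩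
            exact Or.inr (by rw [inv_inv]; exact ⟨c, Finset.mem_toList.mp hc, rfl⟩)
        have hgen : ∀ h : G ⧸ derivedSeries G (i + 1),
            ∃ w : List (G ⧸ derivedSeries G (i + 1)), WOver X w ∧ w.prod = h := by
          intro h
          obtain ⟨g, rfl⟩ := hπsurj h
          have hg : g ∈ Subgroup.closure (C' : Set G) := by
            rw [hC'top]; exact Subgroup.mem_top _
          obtain ⟨l, hlmem, hlprod⟩ := exists_word_of_mem_closure hg
          refine ⟨l.map π, ?_, ?_⟩
          · intro y hy
            rcases List.mem_map.mp hy with ⟨x, hx, rfl⟩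
            rcases hlmem x hx with h | h
            · exact Or.inl ⟨x, h, rfl⟩
            · exact Or.inr (by rw [← map_inv]; exact ⟨x⁻¹, h, rfl⟩)
          · rw [← hlprod, MonoidHom.map_list_prod]
        set S : Set (G ⧸ derivedSeries G (i + 1)) := π '' (T : Set G) with hSdef
        have hSX : ∀ s ∈ S, s ∈ X := by
          intro s hs
          rcases hs with ⟨t, ht, rfl⟩
          exact ⟨t, hTsub ht, rfl⟩
        have hSA : ∀ s ∈ S, s ∈ A := by
          intro s hs
          rcases hs with ⟨t, ht, rfl⟩
          refine ⟨t, ?_, rfl⟩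
          rw [← hT]
          exact Subgroup.subset_normalClosure ht
        have hcore := core hA hcomm LL hnd hcov hLLc hgen S hSX hSA
        refine ⟨C', n + 4 * LL.length, hC'top, ?_⟩
        intro g
        obtain ⟨p, hp, hpN⟩ := hP g
        have hνmem : π (p⁻¹ * g) ∈ Subgroup.normalClosure S := by
          apply map_ncl_le π (T : Set G)
          · rw [hT]
            exact ⟨p⁻¹ * g, hpN, rfl⟩
        have hprod := hcore _ hνmem
        obtain ⟨q, hq, hπq⟩ := isProd_lift π (C' : Set G) hprod
        refine ⟨p * q, isProd_mul (isProd_mono_set hCsub hp) hq, ?_⟩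
        have : π ((p * q)⁻¹ * g) = 1 := by
          rw [mul_inv_rev, mul_assoc, map_mul, map_inv, hπq]
          exact inv_mul_cancel _
        have := (QuotientGroup.eq_one_iff _).mp this
        simpa using this
  obtain ⟨C, n, hCtop, hP⟩ := claim d
  refine ⟨C, n, hCtop, ?_⟩
  intro g
  obtain ⟨p, hp, hpN⟩ := hP g
  rw [hd, Subgroup.mem_bot, inv_mul_eq_one] at hpN
  rwa [← hpN]
end

section
/- Let G be a group and X ⊆ G. For every element g of the subgroup generated by X and every b ∈ X ∪ X⁻¹, the commutator g·b·g⁻¹·b⁻¹ is a product of 3 palindromes over X. -/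
theorem commutator_with_generator_is_prod_of_three_palindromes {G : Type*} [Group G]
    (X : Set G) (g : G) (hg : g ∈ Subgroup.closure X) (b : G) (hb : b ∈ X ∨ b⁻¹ ∈ X) :
    IsProdOfPalindromes X 3 (g * b * g⁻¹ * b⁻¹) := by
  have hg' : g ∈ Submonoid.closure (X ∪ X⁻¹) := by
    rw [← Subgroup.closure_toSubmonoid]; exact hg
  obtain ⟨w, hw, hwprod⟩ := Submonoid.exists_list_of_mem_closure hg'
  have hw' : ∀ x ∈ w, x ∈ X ∨ x⁻¹ ∈ X := by
    intro x hx
    rcases hw x hx with h | h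
    · exact Or.inl h
    · exact Or.inr (Set.mem_inv.mp h)
  refine ⟨[w ++ b :: w.reverse, w.map (·⁻¹) ++ (w.map (·⁻¹)).reverse, [b⁻¹]], rfl, ?_, ?_⟩
  · intro p hp
    simp only [List.mem_cons, List.not_mem_nil, or_false] at hp
    rcases hp with rfl | rfl | rfl
    · refine ⟨?_, by simp⟩
      intro x hx
      simp only [List.mem_append, List.mem_cons, List.mem_reverse] at hx
      rcases hx with h | h | h
      · exact hw' x h
      · subst h; exact hb
      · exact hw' x h
    · refine ⟨?_, by simp⟩
      intro x hx
      simp only [List.mem_append, List.mem_reverse, List.mem_map] at hx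
      have : ∃ y ∈ w, y⁻¹ = x := by tauto
      obtain ⟨y, hy, rfl⟩ := this
      rcases hw' y hy with h | h
      · exact Or.inr (by simpa)
      · exact Or.inl h
    · refine ⟨?_, rfl⟩
      intro x hx
      simp only [List.mem_singleton] at hx
      subst hx
      rcases hb with h | h
      · exact Or.inr (by simpa)
      · exact Or.inl h
  · have h1 : (w.map (·⁻¹)).reverse.prod = g⁻¹ := by
      rw [← hwprod]; exact (List.prod_inv_reverse w).symm
    have h2 : (w.map (·⁻¹)).prod = (w.reverse.prod)⁻¹ := by
      have := List.prod_inv_reverse w.reverse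
      simpa using this.symm
    simp only [List.map_cons, List.map_nil, List.prod_cons, List.prod_nil, List.prod_append,
      hwprod, h1, h2, mul_one]
    group
end

section
/- Let G be a group and X ⊆ G. If g ∈ G is a product of k palindromes over X and h belongs to the subgroup generated by X, then h·g·h⁻¹ is a product of k + 1 palindromes over X. -/
/-- Conjugate a list of words by `u`, alternating `u` and `u.map (·⁻¹)`. -/
def conjWords {G : Type*} [Group G] (u : List G) : List (List G) → List (List G)
  | [] => []
  | p :: ps => (u ++ p ++ u.reverse) :: conjWords (u.map (·⁻¹)) ps

section aux
variable {G : Type*} [Group G] (X : Set G)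

lemma conjWords_length (u : List G) (ws : List (List G)) :
    (conjWords u ws).length = ws.length := by
  induction ws generalizing u with
  | nil => rfl
  | cons p ps ih => simp [conjWords, ih]

lemma conjWords_pal (u : List G) (hu : ∀ x ∈ u, x ∈ X ∨ x⁻¹ ∈ X)
    (ws : List (List G)) (hws : ∀ w ∈ ws, IsPalindromicWord X w) :
    ∀ q ∈ conjWords u ws, IsPalindromicWord X q := by
  induction ws generalizing u with
  | nil => simp [conjWords]
  | cons p ps ih =>
    intro q hq
    rcases List.mem_cons.mp hq with rfl | hq
    · obtain ⟨hp1, hp2⟩ := hws p (by simp)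
      constructor
      · intro x hx
        simp only [List.mem_append, List.mem_reverse] at hx
        rcases hx with (hx | hx) | hx
        · exact hu x hx
        · exact hp1 x hx
        · exact hu x hx
      · simp [List.reverse_append, hp2, List.append_assoc]
    · exact ih (u.map (·⁻¹))
        (by intro x hx; simp only [List.mem_map] at hx
            obtain ⟨y, hy, rfl⟩ := hx
            rcases hu y hy with h | h
            · exact Or.inr (by simpa using h)
            · exact Or.inl h)
        (fun w hw => hws w (by simp [hw])) q hq

/-- the "end value" picked up by the alternating conjugation -/
def endVal (u : List G) (n : ℕ) : G :=
  if Even n then u.prod⁻¹ else u.reverse.prod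

lemma endVal_succ (u : List G) (n : ℕ) :
    endVal u (n + 1) = endVal (u.map (·⁻¹)) n := by
  rcases Nat.even_or_odd n with he | ho
  · have : ¬ Even (n+1) := by simpa using he.add_one
    simp only [endVal, if_pos he, if_neg this]
    rw [List.prod_reverse_noncomm]
  · have he' : Even (n+1) := ho.add_one
    simp only [endVal, if_pos he', if_neg (Nat.not_even_iff_odd.mpr ho)]
    rw [List.prod_inv_reverse]

lemma conjWords_prod (ws : List (List G)) : ∀ u : List G,
    ((conjWords u ws).map List.prod).prod
      = u.prod * (ws.map List.prod).prod * endVal u ws.length := by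
  induction ws with
  | nil => intro u; simp [conjWords, endVal]
  | cons p ps ih =>
    intro u
    simp only [conjWords, List.map_cons, List.prod_cons, ih (u.map (·⁻¹)),
      List.length_cons, ← endVal_succ]
    have huinv : (u.map (·⁻¹)).prod = u.reverse.prod⁻¹ := by
      rw [List.prod_inv_reverse]; simp [List.map_reverse]
    simp only [List.prod_append, huinv]
    group

end aux

theorem conjugate_prod_of_palindromes {G : Type*} [Group G]
    (X : Set G) (k : ℕ) (g : G) (hg : IsProdOfPalindromes X k g)
    (h : G) (hh : h ∈ Subgroup.closure X) :
    IsProdOfPalindromes X (k + 1) (h * g * h⁻¹) := by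
  obtain ⟨ws, hlen, hpal, hprod⟩ := hg
  -- get a word for h
  have hh' : h ∈ Submonoid.closure (X ∪ X⁻¹) := by
    rw [← Subgroup.closure_toSubmonoid]; exact hh
  obtain ⟨u, hu, hup⟩ := Submonoid.exists_list_of_mem_closure hh'
  have hu' : ∀ x ∈ u, x ∈ X ∨ x⁻¹ ∈ X := by
    intro x hx
    rcases hu x hx with h1 | h1
    · exact Or.inl h1
    · exact Or.inr (by simpa using h1)
  -- the fixer word
  set fixer : List G := if Even k then [] else (u.map (·⁻¹)) ++ (u.map (·⁻¹)).reverse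
    with hfix
  refine ⟨conjWords u ws ++ [fixer], ?_, ?_, ?_⟩
  · simp [conjWords_length, hlen]
  · intro q hq
    rcases List.mem_append.mp hq with hq | hq
    · exact conjWords_pal X u hu' ws hpal q hq
    · simp only [List.mem_singleton] at hq
      subst hq
      rcases Nat.even_or_odd k with he | ho
      · simp only [hfix, if_pos he]
        exact ⟨by simp, rfl⟩
      · simp only [hfix, if_neg (Nat.not_even_iff_odd.mpr ho)]
        constructor
        · intro x hx
          simp only [List.mem_append, List.mem_reverse, List.mem_map] at hx
          have : ∃ y ∈ u, y⁻¹ = x := by tauto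
          obtain ⟨y, hy, rfl⟩ := this
          rcases hu' y hy with h1 | h1
          · exact Or.inr (by simpa using h1)
          · exact Or.inl h1
        · simp [List.reverse_append]
  · have hinvprod : (u.map (·⁻¹)).prod = u.reverse.prod⁻¹ := by
      rw [List.prod_inv_reverse]; simp [List.map_reverse]
    have hrevinv : (u.map (·⁻¹)).reverse.prod = u.prod⁻¹ := by
      rw [← List.prod_inv_reverse]
    simp only [List.map_append, List.prod_append, conjWords_prod, hlen, hprod,
      List.map_cons, List.map_nil, List.prod_cons, List.prod_nil, mul_one, hup]
    rcases Nat.even_or_odd k with he | ho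
    · simp [hfix, if_pos he, endVal, he, hup]
    · have : ¬ Even k := Nat.not_even_iff_odd.mpr ho
      simp only [hfix, if_neg this, endVal, List.prod_append, hinvprod, hrevinv, hup]
      group
end
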